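/- Let μᵣ and μₛ be probability measures on Ω with total variation distance δ(μᵣ, μₛ), and h₁, h₂ hypotheses with labeling function f. If the synthetic risk difference satisfies Δεₛ ≥ δ(μᵣ, μₛ), then the real risk difference satisfies Δεᵣ ≥ 0. -/

import Mathlib

open MeasureTheory

lemma signed_diff_le_totalVariation {α : Type*} [MeasurableSpace α]
    (s : SignedMeasure α) {A B : Set α} (hA : MeasurableSet A) (hB : MeasurableSet B) :
    s A - s B ≤ (s.totalVariation Set.univ).toReal := by
  set j := s.toJordanDecomposition with hj
  have happly : ∀ {C : Set α}, MeasurableSet C →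
      s C = (j.posPart C).toReal - (j.negPart C).toReal := by
    intro C hC
    conv_lhs => rw [← s.toSignedMeasure_toJordanDecomposition]
    rw [JordanDecomposition.toSignedMeasure, Measure.toSignedMeasure_sub_apply hC]
    rfl
  have htv : (s.totalVariation Set.univ).toReal =
      (j.posPart Set.univ).toReal + (j.negPart Set.univ).toReal := by
    rw [SignedMeasure.totalVariation, Measure.add_apply,
      ENNReal.toReal_add (measure_ne_top _ _) (measure_ne_top _ _)]
  rw [happly hA, happly hB, htv]
  have h1 : (j.posPart A).toReal ≤ (j.posPart Set.univ).toReal :=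
    ENNReal.toReal_mono (measure_ne_top _ _) (measure_mono (Set.subset_univ _))
  have h2 : (j.negPart B).toReal ≤ (j.negPart Set.univ).toReal :=
    ENNReal.toReal_mono (measure_ne_top _ _) (measure_mono (Set.subset_univ _))
  have h3 : 0 ≤ (j.negPart A).toReal := ENNReal.toReal_nonneg
  have h4 : 0 ≤ (j.posPart B).toReal := ENNReal.toReal_nonneg
  linarith

theorem rank_preservation_global {Ω Y : Type*} [MeasurableSpace Ω]
    (μr μs : Measure Ω) [IsProbabilityMeasure μr] [IsProbabilityMeasure μs]
    (f h₁ h₂ : Ω → Y)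
    (hm1 : MeasurableSet {x | h₁ x ≠ f x})
    (hm2 : MeasurableSet {x | h₂ x ≠ f x})
    (hm12 : MeasurableSet {x | h₁ x ≠ h₂ x})
    (hgap : (μs {x | h₂ x ≠ f x}).toReal - (μs {x | h₁ x ≠ f x}).toReal ≥
      ((μr.toSignedMeasure - μs.toSignedMeasure).totalVariation Set.univ).toReal) :
    (μr {x | h₂ x ≠ f x}).toReal - (μr {x | h₁ x ≠ f x}).toReal ≥ 0 := by
  set ν := μr.toSignedMeasure - μs.toSignedMeasure with hν
  have key : ν {x | h₁ x ≠ f x} - ν {x | h₂ x ≠ f x} ≤ (ν.totalVariation Set.univ).toReal :=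
    signed_diff_le_totalVariation ν hm1 hm2
  rw [hν, Measure.toSignedMeasure_sub_apply hm1, Measure.toSignedMeasure_sub_apply hm2] at key
  unfold Measure.real at key
  linarith
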